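/- Let C be an additive category with binary biproducts. Let f' : E' → F', f : E → F, g' : E' → E and g : F' → F be morphisms of cochain complexes in C, and let h be a homotopy between g∘f' and f∘g' (i.e. g f' − f g' = d h + h d, with h of degree −1). Then the degreewise maps ψ : cone(f') → cone(f), ψ(x',y') = (g'(x'), g(y') + h(x')), and φ : cone(−g') → cone(g), φ(x',x) = (−f'(x'), f(x) + h(x')), are morphisms of complexes, and a suitable reordering of the direct sum factors defines an isomorphism of complexes cone(φ) ≅ cone(ψ). -/

import Mathlib

/-! Cochain complexes over an additive category with binary biproducts, mapping
cones, and homotopies (Burgos Gil–Freixas–Liţcanu, Lemma 2.3). -/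

noncomputable section

open CategoryTheory Limits

/-- A cochain complex in an additive category. -/
structure Cx (C : Type*) [Category C] [Preadditive C] where
  X : ℤ → C
  d : ∀ n, X n ⟶ X (n + 1)
  dd : ∀ n, d n ≫ d (n + 1) = 0

variable {C : Type*} [Category C] [Preadditive C] [HasBinaryBiproducts C]

/-- A morphism of cochain complexes. -/
@[ext] structure CxHom (E F : Cx C) where
  f : ∀ n, E.X n ⟶ F.X n
  comm : ∀ n, f n ≫ F.d n = E.d n ≫ f (n + 1)

/-- The identity morphism of complexes. -/
def CxHom.id (E : Cx C) : CxHom E E := ⟨fun _ => 𝟙 _, by simp⟩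

/-- Composition of morphisms of complexes. -/
def CxHom.comp {E F G : Cx C} (v : CxHom F G) (u : CxHom E F) : CxHom E G where
  f n := u.f n ≫ v.f n
  comm n := by rw [Category.assoc, v.comm, ← Category.assoc, u.comm, Category.assoc]

/-- The negative of a morphism of complexes. -/
def CxHom.neg {E F : Cx C} (u : CxHom E F) : CxHom E F where
  f n := -u.f n
  comm n := by simp [u.comm]

/-- The mapping cone of a morphism of complexes:
`cone(u)ⁿ = Eⁿ⁺¹ ⊞ Fⁿ` with differential `d(x,y) = (-dx, u(x) + dy)`. -/
def cone {E F : Cx C} (u : CxHom E F) : Cx C where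
  X n := E.X (n + 1) ⊞ F.X n
  d n := biprod.lift (biprod.fst ≫ (-E.d (n + 1)))
    (biprod.fst ≫ u.f (n + 1) + biprod.snd ≫ F.d n)
  dd n := by
    apply biprod.hom_ext
    · simp [E.dd]
    · simp only [Category.assoc, biprod.lift_snd, zero_comp, Preadditive.comp_add]
      rw [← Category.assoc _ biprod.fst _, ← Category.assoc _ biprod.snd _,
        biprod.lift_fst, biprod.lift_snd]
      simp only [Preadditive.add_comp, Category.assoc, Preadditive.neg_comp,
        Preadditive.comp_neg, ← u.comm, F.dd, comp_zero]
      abel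

/-- Auxiliary construction: a morphism of cones induced by a homotopy-commuting
square. -/
def coneMk {X' Y' X Y : Cx C} (a' : CxHom X' Y') (a : CxHom X Y)
    (u' : CxHom X' X) (u : CxHom Y' Y) (h : ∀ n, X'.X (n + 1) ⟶ Y.X n)
    (hh : ∀ n, a'.f (n + 1) ≫ u.f (n + 1) - u'.f (n + 1) ≫ a.f (n + 1)
      = X'.d (n + 1) ≫ h (n + 1) + h n ≫ Y.d n) :
    CxHom (cone a') (cone a) where
  f n := biprod.lift (biprod.fst ≫ u'.f (n + 1))
    (biprod.fst ≫ h n + biprod.snd ≫ u.f n)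
  comm n := by
    apply biprod.hom_ext
    · simp [cone, u'.comm]
    · have := hh n
      simp only [cone, Category.assoc, biprod.lift_snd, Preadditive.comp_add,
        Preadditive.add_comp, biprod.lift_fst_assoc, biprod.lift_snd_assoc,
        Preadditive.neg_comp, Preadditive.comp_neg, u.comm]
      rw [show u'.f (n+1) ≫ a.f (n+1)
          = a'.f (n+1) ≫ u.f (n+1) - (X'.d (n+1) ≫ h (n+1) + h n ≫ Y.d n) by
        rw [← hh n]; abel]
      simp only [Preadditive.comp_add, Preadditive.comp_sub, Preadditive.comp_neg]
      abel

set_option maxHeartbeats 1600000 in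
/-- Lemma 2.3 of Burgos Gil–Freixas–Liţcanu.  Let `C` be an
additive category with binary biproducts, let `f' : E' → F'`, `f : E → F`,
`g' : E' → E`, `g : F' → F` be morphisms of cochain complexes in `C`, and let `h` be
a homotopy between `g∘f'` and `f∘g'`, i.e. `g f' - f g' = d h + h d`.  Then the
degreewise maps `ψ : cone(f') → cone(f)`, `ψ(x',y') = (g'(x'), g(y') + h(x'))`, and
`φ : cone(-g') → cone(g)`, `φ(x',x) = (-f'(x'), f(x) + h(x'))`, are morphisms of
complexes, and a suitable reordering of the direct sum factors gives an isomorphism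
of complexes `cone(φ) ≅ cone(ψ)`. -/
theorem statement_0 {C : Type*} [CategoryTheory.Category C]
    [CategoryTheory.Preadditive C] [CategoryTheory.Limits.HasBinaryBiproducts C]
    {E' F' E F : Cx C} (f' : CxHom E' F') (f : CxHom E F) (g' : CxHom E' E)
    (g : CxHom F' F) (h : ∀ n, E'.X (n + 1) ⟶ F.X n)
    (hh : ∀ n, f'.f (n + 1) ≫ g.f (n + 1) - g'.f (n + 1) ≫ f.f (n + 1)
      = E'.d (n + 1) ≫ h (n + 1) + h n ≫ F.d n) :
    ∃ (ψ : CxHom (cone f') (cone f)) (φ : CxHom (cone g'.neg) (cone g)),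
      (∀ n, ψ.f n = CategoryTheory.Limits.biprod.lift
          (CategoryTheory.Limits.biprod.fst ≫ g'.f (n + 1))
          (CategoryTheory.Limits.biprod.fst ≫ h n +
            CategoryTheory.Limits.biprod.snd ≫ g.f n)) ∧
      (∀ n, φ.f n = CategoryTheory.Limits.biprod.lift
          (CategoryTheory.Limits.biprod.fst ≫ (-f'.f (n + 1)))
          (CategoryTheory.Limits.biprod.fst ≫ h n +
            CategoryTheory.Limits.biprod.snd ≫ f.f n)) ∧
      ∃ (θ : CxHom (cone φ) (cone ψ)) (θ' : CxHom (cone ψ) (cone φ)),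
        θ.comp θ' = CxHom.id (cone ψ) ∧ θ'.comp θ = CxHom.id (cone φ) := by
  have hh' : ∀ n, (CxHom.neg g').f (n + 1) ≫ f.f (n + 1)
      - (CxHom.neg f').f (n + 1) ≫ g.f (n + 1)
      = E'.d (n + 1) ≫ h (n + 1) + h n ≫ F.d n := by
    intro n
    simp only [CxHom.neg, Preadditive.neg_comp]
    rw [← hh n]; abel
  refine ⟨coneMk f' f g' g h hh, coneMk g'.neg g f'.neg f h hh',
    fun n => rfl, fun n => by simp only [coneMk, CxHom.neg]; rfl, ?_⟩
  refine ⟨⟨fun n => biprod.lift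
      (biprod.lift (biprod.fst ≫ biprod.fst) (biprod.snd ≫ biprod.fst))
      (biprod.lift (biprod.fst ≫ biprod.snd) (biprod.snd ≫ biprod.snd)), ?_⟩,
    ⟨fun n => biprod.lift
      (biprod.lift (biprod.fst ≫ biprod.fst) (biprod.snd ≫ biprod.fst))
      (biprod.lift (biprod.fst ≫ biprod.snd) (biprod.snd ≫ biprod.snd)), ?_⟩,
    ?_, ?_⟩
  · intro n
    unfold cone
    apply biprod.hom_ext <;> apply biprod.hom_ext <;>
      simp [cone, coneMk, CxHom.neg] <;> abel
  · intro n
    unfold cone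
    apply biprod.hom_ext <;> apply biprod.hom_ext <;>
      simp [cone, coneMk, CxHom.neg] <;> abel
  · ext n : 2
    unfold cone
    apply biprod.hom_ext <;> apply biprod.hom_ext <;>
      simp [cone, CxHom.comp, CxHom.id]
  · ext n : 2
    unfold cone
    apply biprod.hom_ext <;> apply biprod.hom_ext <;>
      simp [cone, CxHom.comp, CxHom.id]

end
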